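/- arXiv:2605.25809 — 3 statements merged into one kernel-verified Lean document; each statement's English description precedes it below -/
import Mathlib

section
/- Let $A \in \mathbb{R}^{m \times n}$ have rank $n$, $b \in \mathbb{R}^m$, and let $S \in \mathbb{R}^{s \times m}$ be a $(1\pm\eta)$ subspace embedding for the column space of the augmented matrix $[A \; b]$, with $0 \le \eta < 1$. Let $x^* = \operatorname{argmin}_x \|Ax - b\|_2$ and let $\hat{x}$ be any minimizer of $\|S(Ax - b)\|_2$. Then $\|A\hat{x} - b\|_2^2 \le \frac{1+\eta}{1-\eta} \|Ax^* - b\|_2^2$. -/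
open Matrix Finset

/-- Sketch-and-solve residual bound: if `S` is a `(1 ± η)` subspace embedding for the
column space of `[A b]`, then the sketched solution `x̂` satisfies
`‖Ax̂ - b‖² ≤ (1+η)/(1-η) ‖Ax* - b‖²`. -/
theorem stmt1 {m n s : ℕ} (A : Matrix (Fin m) (Fin n) ℝ) (hrank : A.rank = n)
    (b : Fin m → ℝ) (S : Matrix (Fin s) (Fin m) ℝ) (η : ℝ) (hη0 : 0 ≤ η) (hη1 : η < 1)
    (hemb : ∀ (x : Fin n → ℝ) (c : ℝ),
      (1 - η) * ∑ i, ((A.mulVec x + c • b) i) ^ 2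
          ≤ ∑ i, (S.mulVec (A.mulVec x + c • b) i) ^ 2 ∧
      ∑ i, (S.mulVec (A.mulVec x + c • b) i) ^ 2
          ≤ (1 + η) * ∑ i, ((A.mulVec x + c • b) i) ^ 2)
    (xstar xhat : Fin n → ℝ)
    (hstar : ∀ y, ∑ i, (A.mulVec xstar i - b i) ^ 2 ≤ ∑ i, (A.mulVec y i - b i) ^ 2)
    (hhat : ∀ y, ∑ i, (S.mulVec (A.mulVec xhat - b) i) ^ 2
        ≤ ∑ i, (S.mulVec (A.mulVec y - b) i) ^ 2) :
    ∑ i, (A.mulVec xhat i - b i) ^ 2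
      ≤ (1 + η) / (1 - η) * ∑ i, (A.mulVec xstar i - b i) ^ 2 := by
  have key : ∀ x : Fin n → ℝ, A.mulVec x + (-1 : ℝ) • b = A.mulVec x - b := by
    intro x; funext i; simp [sub_eq_add_neg]
  have h1 := (hemb xhat (-1)).1
  have h2 := (hemb xstar (-1)).2
  rw [key] at h1 h2
  have h3 := hhat xstar
  have hle : (1 - η) * ∑ i, (A.mulVec xhat i - b i) ^ 2
      ≤ (1 + η) * ∑ i, (A.mulVec xstar i - b i) ^ 2 := by
    calc (1 - η) * ∑ i, (A.mulVec xhat i - b i) ^ 2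
        = (1 - η) * ∑ i, ((A.mulVec xhat - b) i) ^ 2 := by simp [Pi.sub_apply]
      _ ≤ ∑ i, (S.mulVec (A.mulVec xhat - b) i) ^ 2 := h1
      _ ≤ ∑ i, (S.mulVec (A.mulVec xstar - b) i) ^ 2 := h3
      _ ≤ (1 + η) * ∑ i, ((A.mulVec xstar - b) i) ^ 2 := h2
      _ = (1 + η) * ∑ i, (A.mulVec xstar i - b i) ^ 2 := by simp [Pi.sub_apply]
  rw [div_mul_eq_mul_div, le_div_iff₀ (by linarith), mul_comm]
  linarith
end

section
/- Let $A \in \mathbb{R}^{m \times n}$ have rank $n$ with thin SVD $A = U\Sigma V^\top$, let $b \in \mathbb{R}^m$, and let $S_a, S_b \in \mathbb{R}^{s \times m}$ be such that $S_a A$ and $S_b A$ have rank $n$ and $H_a + H_b$ is invertible, where $H_i = U^\top S_i^\top S_i U$ and $P_i = S_i^\top S_i$. Let $x_a = (S_a A)^\dagger S_a b$, $x_b = (S_b A)^\dagger S_b b$, and let $x_\ell$ be the sketched solution for $S_\ell = \frac{1}{\sqrt{2}}\begin{bmatrix} S_a \\ S_b \end{bmatrix}$. Then the antithetic correction $\Delta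 x = x_\ell - \frac{1}{2}(x_a + x_b)$ satisfies $A \Delta x = \frac{1}{2} U (H_a + H_b)^{-1} (H_a - H_b) \Sigma V^\top (x_a - x_b)$. -/
open Matrix Finset

lemma rank_isUnit_aux {n : ℕ} (M : Matrix (Fin n) (Fin n) ℝ) (h : M.rank = n) : IsUnit M := by
  rw [Matrix.rank] at h
  have htop : LinearMap.range M.mulVecLin = ⊤ :=
    Submodule.eq_top_of_finrank_eq (by simpa using h)
  exact Matrix.mulVec_surjective_iff_isUnit.mp (LinearMap.range_eq_top.mp htop)

/-- Antithetic correction identity: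
`A Δx = ½ U (Hₐ+H_b)⁻¹ (Hₐ-H_b) Σ Vᵀ (xₐ - x_b)` where `Δx = x_ℓ - (xₐ+x_b)/2`. -/
theorem stmt4 {m n s : ℕ} (A : Matrix (Fin m) (Fin n) ℝ) (hrank : A.rank = n)
    (b : Fin m → ℝ)
    (U : Matrix (Fin m) (Fin n) ℝ) (d : Fin n → ℝ) (V : Matrix (Fin n) (Fin n) ℝ)
    (hU : Uᵀ * U = 1) (hd : ∀ i, 0 < d i) (hV : Vᵀ * V = 1) (hV' : V * Vᵀ = 1)
    (hSVD : A = U * Matrix.diagonal d * Vᵀ)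
    (Sa Sb : Matrix (Fin s) (Fin m) ℝ)
    (hra : (Sa * A).rank = n) (hrb : (Sb * A).rank = n)
    (Ha Hb : Matrix (Fin n) (Fin n) ℝ)
    (hHa : Ha = Uᵀ * Saᵀ * Sa * U) (hHb : Hb = Uᵀ * Sbᵀ * Sb * U)
    (hinv : IsUnit (Ha + Hb).det)
    (xa xb xl : Fin n → ℝ)
    (hxa : xa = ((Aᵀ * Saᵀ * Sa * A)⁻¹ * Aᵀ * Saᵀ * Sa).mulVec b)
    (hxb : xb = ((Aᵀ * Sbᵀ * Sb * A)⁻¹ * Aᵀ * Sbᵀ * Sb).mulVec b)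
    (Sl : Matrix (Fin s ⊕ Fin s) (Fin m) ℝ)
    (hSl : Sl = (1 / Real.sqrt 2) • Matrix.fromRows Sa Sb)
    (hxl : xl = ((Aᵀ * Slᵀ * Sl * A)⁻¹ * Aᵀ * Slᵀ * Sl).mulVec b) :
    A.mulVec (xl - (1 / 2 : ℝ) • (xa + xb))
      = ((1 / 2 : ℝ) •
          (U * (Ha + Hb)⁻¹ * (Ha - Hb) * Matrix.diagonal d * Vᵀ)).mulVec (xa - xb) := by
  set D : Matrix (Fin n) (Fin n) ℝ := Matrix.diagonal d with hD
  set E : Matrix (Fin n) (Fin n) ℝ := Matrix.diagonal (fun i => (d i)⁻¹) with hE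
  set K : Matrix (Fin n) (Fin n) ℝ := Ha + Hb with hK
  have hdne : ∀ i, d i ≠ 0 := fun i => (hd i).ne'
  have hDT : Dᵀ = D := by rw [hD, Matrix.diagonal_transpose]
  have hDE : D * E = 1 := by
    rw [hD, hE, Matrix.diagonal_mul_diagonal]
    simp [mul_inv_cancel₀, hdne]
  have hED : E * D = 1 := by
    rw [hD, hE, Matrix.diagonal_mul_diagonal]
    simp [inv_mul_cancel₀, hdne]
  have hVdet : IsUnit V.det :=
    IsUnit.of_mul_eq_one _ (by rw [← Matrix.det_mul, hV', Matrix.det_one])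
  have hDVdet : IsUnit (D * Vᵀ).det := by
    rw [Matrix.det_mul, Matrix.det_transpose]
    exact (IsUnit.of_mul_eq_one _ (by rw [← Matrix.det_mul, hDE, Matrix.det_one])).mul hVdet
  -- cancellation helpers
  have hVc : ∀ {k : Type} (X : Matrix (Fin n) k ℝ), Vᵀ * (V * X) = X := fun X => by
    rw [← Matrix.mul_assoc, hV, Matrix.one_mul]
  have hV'c : ∀ {k : Type} (X : Matrix (Fin n) k ℝ), V * (Vᵀ * X) = X := fun X => by
    rw [← Matrix.mul_assoc, hV', Matrix.one_mul]
  have hUc : ∀ {k : Type} (X : Matrix (Fin n) k ℝ), Uᵀ * (U * X) = X := fun X => by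
    rw [← Matrix.mul_assoc, hU, Matrix.one_mul]
  have hDEc : ∀ {k : Type} (X : Matrix (Fin n) k ℝ), D * (E * X) = X := fun X => by
    rw [← Matrix.mul_assoc, hDE, Matrix.one_mul]
  have hEDc : ∀ {k : Type} (X : Matrix (Fin n) k ℝ), E * (D * X) = X := fun X => by
    rw [← Matrix.mul_assoc, hED, Matrix.one_mul]
  -- invertibility of Ha and Hb
  have hrankU : ∀ (S : Matrix (Fin s) (Fin m) ℝ), (S * A).rank = n → (S * U).rank = n := by
    intro S hS
    have : S * A = (S * U) * (D * Vᵀ) := by rw [hSVD]; simp only [Matrix.mul_assoc]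
    rwa [this, Matrix.rank_mul_eq_left_of_isUnit_det _ _ hDVdet] at hS
  have hHaU : Ha = (Sa * U)ᵀ * (Sa * U) := by
    rw [hHa, Matrix.transpose_mul]; simp only [Matrix.mul_assoc]
  have hHbU : Hb = (Sb * U)ᵀ * (Sb * U) := by
    rw [hHb, Matrix.transpose_mul]; simp only [Matrix.mul_assoc]
  have hHadet : IsUnit Ha.det := by
    rw [← Matrix.isUnit_iff_isUnit_det]
    exact rank_isUnit_aux _ (by rw [hHaU, Matrix.rank_transpose_mul_self, hrankU Sa hra])
  have hHbdet : IsUnit Hb.det := by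
    rw [← Matrix.isUnit_iff_isUnit_det]
    exact rank_isUnit_aux _ (by rw [hHbU, Matrix.rank_transpose_mul_self, hrankU Sb hrb])
  have hHac : ∀ {k : Type} (X : Matrix (Fin n) k ℝ), Ha * (Ha⁻¹ * X) = X := fun X => by
    rw [← Matrix.mul_assoc, Matrix.mul_nonsing_inv _ hHadet, Matrix.one_mul]
  have hHbc : ∀ {k : Type} (X : Matrix (Fin n) k ℝ), Hb * (Hb⁻¹ * X) = X := fun X => by
    rw [← Matrix.mul_assoc, Matrix.mul_nonsing_inv _ hHbdet, Matrix.one_mul]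
  have hKc : ∀ {k : Type} (X : Matrix (Fin n) k ℝ), K * (K⁻¹ * X) = X := fun X => by
    rw [← Matrix.mul_assoc, Matrix.mul_nonsing_inv _ hinv, Matrix.one_mul]
  have hKc' : ∀ {k : Type} (X : Matrix (Fin n) k ℝ), K⁻¹ * (K * X) = X := fun X => by
    rw [← Matrix.mul_assoc, Matrix.nonsing_inv_mul _ hinv, Matrix.one_mul]
  -- the single-sketch solves
  have hGa : Aᵀ * Saᵀ * Sa * A = V * (D * (Ha * (D * Vᵀ))) := by
    rw [hSVD, hHa]
    simp [Matrix.transpose_mul, hDT, Matrix.mul_assoc]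
  have hGainv : (Aᵀ * Saᵀ * Sa * A)⁻¹ = V * (E * (Ha⁻¹ * (E * Vᵀ))) := by
    apply Matrix.inv_eq_right_inv
    rw [hGa]
    simp only [Matrix.mul_assoc, hVc, hDEc, hHac, hV']
  have hAXa : A * ((Aᵀ * Saᵀ * Sa * A)⁻¹ * Aᵀ * Saᵀ * Sa) = U * (Ha⁻¹ * (Uᵀ * (Saᵀ * Sa))) := by
    rw [hGainv, hSVD]
    simp only [Matrix.transpose_mul, hDT, Matrix.transpose_transpose,
      Matrix.mul_assoc, hVc, hDEc, hEDc, hV'c]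
  have hGb : Aᵀ * Sbᵀ * Sb * A = V * (D * (Hb * (D * Vᵀ))) := by
    rw [hSVD, hHb]
    simp [Matrix.transpose_mul, hDT, Matrix.mul_assoc]
  have hGbinv : (Aᵀ * Sbᵀ * Sb * A)⁻¹ = V * (E * (Hb⁻¹ * (E * Vᵀ))) := by
    apply Matrix.inv_eq_right_inv
    rw [hGb]
    simp only [Matrix.mul_assoc, hVc, hDEc, hHbc, hV']
  have hAXb : A * ((Aᵀ * Sbᵀ * Sb * A)⁻¹ * Aᵀ * Sbᵀ * Sb) = U * (Hb⁻¹ * (Uᵀ * (Sbᵀ * Sb))) := by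
    rw [hGbinv, hSVD]
    simp only [Matrix.transpose_mul, hDT, Matrix.transpose_transpose,
      Matrix.mul_assoc, hVc, hDEc, hEDc, hV'c]
  -- the multilevel sketch
  have hPl : Slᵀ * Sl = (1/2 : ℝ) • (Saᵀ * Sa + Sbᵀ * Sb) := by
    subst hSl
    rw [Matrix.transpose_smul, Matrix.transpose_fromRows, Matrix.smul_mul, Matrix.mul_smul,
      smul_smul, Matrix.fromCols_mul_fromRows]
    congr 1
    rw [div_mul_div_comm, one_mul, Real.mul_self_sqrt (by norm_num)]
  have hGl : Aᵀ * Slᵀ * Sl * A = V * (D * (((1/2 : ℝ) • K) * (D * Vᵀ))) := by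
    rw [Matrix.mul_assoc Aᵀ Slᵀ Sl, hPl, hSVD, hK, hHa, hHb]
    simp [Matrix.transpose_mul, hDT, Matrix.mul_assoc, Matrix.mul_add,
      Matrix.add_mul, Matrix.mul_smul, Matrix.smul_mul, smul_add]
  have hGlinv : (Aᵀ * Slᵀ * Sl * A)⁻¹ = V * (E * (((2 : ℝ) • K⁻¹) * (E * Vᵀ))) := by
    apply Matrix.inv_eq_right_inv
    rw [hGl]
    simp only [Matrix.mul_assoc, Matrix.smul_mul, Matrix.mul_smul, smul_smul, hVc, hDEc, hKc]
    norm_num [hVc, hDEc, hKc, hV']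
  have hAXl : A * ((Aᵀ * Slᵀ * Sl * A)⁻¹ * Aᵀ * Slᵀ * Sl) =
      U * (K⁻¹ * (Uᵀ * (Saᵀ * Sa))) + U * (K⁻¹ * (Uᵀ * (Sbᵀ * Sb))) := by
    rw [Matrix.mul_assoc ((Aᵀ * Slᵀ * Sl * A)⁻¹ * Aᵀ) Slᵀ Sl, hPl, hGlinv, hSVD]
    simp only [Matrix.transpose_mul, hDT, Matrix.transpose_transpose,
      Matrix.mul_assoc, Matrix.smul_mul, Matrix.mul_smul, smul_smul, Matrix.mul_add, smul_add,
      hVc, hDEc, hEDc, hV'c]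
    norm_num
  -- reduce goal to a matrix identity
  set Qa : Matrix (Fin n) (Fin m) ℝ := Uᵀ * (Saᵀ * Sa) with hQa
  set Qb : Matrix (Fin n) (Fin m) ℝ := Uᵀ * (Sbᵀ * Sb) with hQb
  have hDVXa : (D * Vᵀ) * ((Aᵀ * Saᵀ * Sa * A)⁻¹ * Aᵀ * Saᵀ * Sa) = Ha⁻¹ * Qa := by
    have h1 : D * Vᵀ = Uᵀ * A := by rw [hSVD]; simp only [Matrix.mul_assoc, hUc]
    rw [h1, Matrix.mul_assoc, hAXa, hUc]
  have hDVXb : (D * Vᵀ) * ((Aᵀ * Sbᵀ * Sb * A)⁻¹ * Aᵀ * Sbᵀ * Sb) = Hb⁻¹ * Qb := by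
    have h1 : D * Vᵀ = Uᵀ * A := by rw [hSVD]; simp only [Matrix.mul_assoc, hUc]
    rw [h1, Matrix.mul_assoc, hAXb, hUc]
  -- the key algebraic identity
  have e1 : (Ha - Hb) * (Ha⁻¹ * Qa) = Qa - Hb * (Ha⁻¹ * Qa) := by
    rw [Matrix.sub_mul, hHac]
  have e2 : (Ha - Hb) * (Hb⁻¹ * Qb) = Ha * (Hb⁻¹ * Qb) - Qb := by
    rw [Matrix.sub_mul, hHbc]
  have e3 : K⁻¹ * (Hb * (Ha⁻¹ * Qa)) = Ha⁻¹ * Qa - K⁻¹ * Qa := by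
    have hKH : Hb = K - Ha := by rw [hK]; abel
    rw [hKH, Matrix.sub_mul, Matrix.mul_sub, hKc', hHac]
  have e4 : K⁻¹ * (Ha * (Hb⁻¹ * Qb)) = Hb⁻¹ * Qb - K⁻¹ * Qb := by
    have hKH : Ha = K - Hb := by rw [hK]; abel
    rw [hKH, Matrix.sub_mul, Matrix.mul_sub, hKc', hHbc]
  have main : U * (K⁻¹ * Qa) + U * (K⁻¹ * Qb) - (1/2 : ℝ) • (U * (Ha⁻¹ * Qa) + U * (Hb⁻¹ * Qb))
      = (1/2 : ℝ) • (U * (K⁻¹ * ((Ha - Hb) * (Ha⁻¹ * Qa))))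
        - (1/2 : ℝ) • (U * (K⁻¹ * ((Ha - Hb) * (Hb⁻¹ * Qb)))) := by
    rw [e1, e2, Matrix.mul_sub K⁻¹, Matrix.mul_sub K⁻¹, e3, e4]
    simp only [Matrix.mul_sub, Matrix.mul_add]
    module
  -- the RHS matrices
  have hMXa : (U * (Ha + Hb)⁻¹ * (Ha - Hb) * D * Vᵀ) * ((Aᵀ * Saᵀ * Sa * A)⁻¹ * Aᵀ * Saᵀ * Sa)
      = U * (K⁻¹ * ((Ha - Hb) * (Ha⁻¹ * Qa))) := by
    have h2 : U * (Ha + Hb)⁻¹ * (Ha - Hb) * D * Vᵀ = (U * ((Ha + Hb)⁻¹ * (Ha - Hb))) * (D * Vᵀ) := by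
      simp only [Matrix.mul_assoc]
    rw [h2, Matrix.mul_assoc, hDVXa, ← hK]
    simp only [Matrix.mul_assoc]
  have hMXb : (U * (Ha + Hb)⁻¹ * (Ha - Hb) * D * Vᵀ) * ((Aᵀ * Sbᵀ * Sb * A)⁻¹ * Aᵀ * Sbᵀ * Sb)
      = U * (K⁻¹ * ((Ha - Hb) * (Hb⁻¹ * Qb))) := by
    have h2 : U * (Ha + Hb)⁻¹ * (Ha - Hb) * D * Vᵀ = (U * ((Ha + Hb)⁻¹ * (Ha - Hb))) * (D * Vᵀ) := by
      simp only [Matrix.mul_assoc]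
    rw [h2, Matrix.mul_assoc, hDVXb, ← hK]
    simp only [Matrix.mul_assoc]
  -- finish: apply everything to b
  subst hxa hxb hxl
  rw [Matrix.mulVec_sub, Matrix.mulVec_smul, Matrix.mulVec_add]
  simp only [Matrix.mulVec_mulVec]
  rw [hAXa, hAXb, hAXl, Matrix.mulVec_sub]
  simp only [Matrix.mulVec_mulVec]
  rw [Matrix.smul_mul, Matrix.smul_mul, hMXa, hMXb]
  have hb2 := congrArg (fun M : Matrix (Fin m) (Fin m) ℝ => M.mulVec b) main
  simp only [Matrix.sub_mulVec, Matrix.add_mulVec, Matrix.smul_mulVec] at hb2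
  simp only [Matrix.add_mulVec, Matrix.smul_mulVec]
  simpa using hb2
end

section
/- Let $A \in \mathbb{R}^{m \times n}$ have rank $n$ with thin SVD $A = U\Sigma V^\top$, let $b \in \mathbb{R}^m$, and let $S_a, S_b \in \mathbb{R}^{s \times m}$ be such that $S_a A$ and $S_b A$ have rank $n$ and $H_a + H_b$ is invertible, where $H_i = U^\top S_i^\top S_i U$. Let $x_a, x_b$ be the sketched solutions for $S_a, S_b$ respectively, and let $x_\ell$ be the sketched solution for $S_\ell = \frac{1}{\sqrt{2}}\begin{bmatrix} S_a \\ S_b \end{bmatrix}$. Then the non-antithetic correction $\Delta x = x_\ell - x_a$ satisfies $A \Delta x = U (H_a + H_b)^{-1} H_b \, \Sigma V^\top (x_b - x_a)$. -/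
open Matrix Finset

/-- A square matrix of full rank has unit determinant. -/
lemma isUnit_det_of_rank_eq {k : ℕ} (M : Matrix (Fin k) (Fin k) ℝ)
    (h : M.rank = k) : IsUnit M.det := by
  have hsurj : Function.Surjective M.mulVecLin := by
    rw [← LinearMap.range_eq_top]
    apply Submodule.eq_top_of_finrank_eq
    simpa [Matrix.rank] using h
  exact (Matrix.isUnit_iff_isUnit_det M).mp (Matrix.mulVec_surjective_iff_isUnit.mp hsurj)

/-- Non-antithetic correction identity:
`A Δx = U (Hₐ+H_b)⁻¹ H_b Σ Vᵀ (x_b - xₐ)` where `Δx = x_ℓ - xₐ`. -/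
theorem stmt5 {m n s : ℕ} (A : Matrix (Fin m) (Fin n) ℝ) (hrank : A.rank = n)
    (b : Fin m → ℝ)
    (U : Matrix (Fin m) (Fin n) ℝ) (d : Fin n → ℝ) (V : Matrix (Fin n) (Fin n) ℝ)
    (hU : Uᵀ * U = 1) (hd : ∀ i, 0 < d i) (hV : Vᵀ * V = 1) (hV' : V * Vᵀ = 1)
    (hSVD : A = U * Matrix.diagonal d * Vᵀ)
    (Sa Sb : Matrix (Fin s) (Fin m) ℝ)
    (hra : (Sa * A).rank = n) (hrb : (Sb * A).rank = n)
    (Ha Hb : Matrix (Fin n) (Fin n) ℝ)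
    (hHa : Ha = Uᵀ * Saᵀ * Sa * U) (hHb : Hb = Uᵀ * Sbᵀ * Sb * U)
    (hinv : IsUnit (Ha + Hb).det)
    (xa xb xl : Fin n → ℝ)
    (hxa : xa = ((Aᵀ * Saᵀ * Sa * A)⁻¹ * Aᵀ * Saᵀ * Sa).mulVec b)
    (hxb : xb = ((Aᵀ * Sbᵀ * Sb * A)⁻¹ * Aᵀ * Sbᵀ * Sb).mulVec b)
    (Sl : Matrix (Fin s ⊕ Fin s) (Fin m) ℝ)
    (hSl : Sl = (1 / Real.sqrt 2) • Matrix.fromRows Sa Sb)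
    (hxl : xl = ((Aᵀ * Slᵀ * Sl * A)⁻¹ * Aᵀ * Slᵀ * Sl).mulVec b) :
    A.mulVec (xl - xa)
      = (U * (Ha + Hb)⁻¹ * Hb * Matrix.diagonal d * Vᵀ).mulVec (xb - xa) := by
  set D : Matrix (Fin n) (Fin n) ℝ := Matrix.diagonal d with hD
  -- basic units
  have hDu : IsUnit D.det := by
    rw [hD, Matrix.det_diagonal]
    exact isUnit_iff_ne_zero.mpr (Finset.prod_ne_zero_iff.mpr fun i _ => (hd i).ne')
  have hVu : IsUnit V.det := by
    have := congrArg Matrix.det hV'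
    rw [Matrix.det_mul, Matrix.det_one] at this
    exact IsUnit.of_mul_eq_one _ this
  -- representations via SVD
  have haR : Aᵀ * Saᵀ * Sa * A = V * D * Ha * D * Vᵀ := by
    rw [hSVD, hHa]
    simp only [Matrix.transpose_mul, Matrix.diagonal_transpose, Matrix.transpose_transpose,
      Matrix.mul_assoc, hD]
  have hbR : Aᵀ * Sbᵀ * Sb * A = V * D * Hb * D * Vᵀ := by
    rw [hSVD, hHb]
    simp only [Matrix.transpose_mul, Matrix.diagonal_transpose, Matrix.transpose_transpose,
      Matrix.mul_assoc, hD]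
  have hsum : Aᵀ * Saᵀ * Sa * A + Aᵀ * Sbᵀ * Sb * A = V * D * (Ha + Hb) * D * Vᵀ := by
    rw [haR, hbR]
    noncomm_ring
  have hsumu : IsUnit (V * D * (Ha + Hb) * D * Vᵀ).det := by
    simp only [Matrix.det_mul, Matrix.det_transpose]
    exact (((hVu.mul hDu).mul hinv).mul hDu).mul hVu
  -- invertibility of the Gram matrices
  have hMau : IsUnit (Aᵀ * Saᵀ * Sa * A).det := by
    apply isUnit_det_of_rank_eq
    have : Aᵀ * Saᵀ * Sa * A = (Sa * A)ᵀ * (Sa * A) := by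
      simp only [Matrix.transpose_mul, Matrix.mul_assoc]
    rw [this, Matrix.rank_transpose_mul_self, hra]
  have hMbu : IsUnit (Aᵀ * Sbᵀ * Sb * A).det := by
    apply isUnit_det_of_rank_eq
    have : Aᵀ * Sbᵀ * Sb * A = (Sb * A)ᵀ * (Sb * A) := by
      simp only [Matrix.transpose_mul, Matrix.mul_assoc]
    rw [this, Matrix.rank_transpose_mul_self, hrb]
  have hMabu : IsUnit (Aᵀ * Saᵀ * Sa * A + Aᵀ * Sbᵀ * Sb * A).det := by
    rw [hsum]; exact hsumu
  -- the combined sketch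
  have hSS : Slᵀ * Sl = (1/2 : ℝ) • (Saᵀ * Sa + Sbᵀ * Sb) := by
    rw [hSl, Matrix.transpose_smul, Matrix.smul_mul, Matrix.mul_smul, smul_smul,
      Matrix.transpose_fromRows, Matrix.fromCols_mul_fromRows]
    congr 1
    rw [div_mul_div_comm, one_mul, Real.mul_self_sqrt (by norm_num : (0:ℝ) ≤ 2)]
  have hNL : Aᵀ * Slᵀ * Sl = (1/2 : ℝ) • (Aᵀ * Saᵀ * Sa + Aᵀ * Sbᵀ * Sb) := by
    rw [Matrix.mul_assoc, hSS]
    simp only [Matrix.mul_smul, Matrix.mul_add, Matrix.mul_assoc]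
  have hMlR : Aᵀ * Slᵀ * Sl * A
      = (1/2 : ℝ) • (Aᵀ * Saᵀ * Sa * A + Aᵀ * Sbᵀ * Sb * A) := by
    rw [hNL]
    simp only [Matrix.smul_mul, Matrix.add_mul]
  have hMlu : IsUnit (Aᵀ * Slᵀ * Sl * A).det := by
    rw [hMlR, Matrix.det_smul]
    exact (IsUnit.pow _ (isUnit_iff_ne_zero.mpr (by norm_num))).mul hMabu
  -- normal equations
  have key : ∀ (M : Matrix (Fin n) (Fin n) ℝ) (N : Matrix (Fin n) (Fin m) ℝ)
      (x : Fin n → ℝ), IsUnit M.det → x = (M⁻¹ * N).mulVec b →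
      M.mulVec x = N.mulVec b := by
    intro M N x hM hx
    rw [hx, Matrix.mulVec_mulVec, ← Matrix.mul_assoc, Matrix.mul_nonsing_inv _ hM,
      Matrix.one_mul]
  have eqa : (Aᵀ * Saᵀ * Sa * A).mulVec xa = (Aᵀ * Saᵀ * Sa).mulVec b := by
    apply key _ _ _ hMau
    rw [hxa]; simp only [Matrix.mul_assoc]
  have eqb : (Aᵀ * Sbᵀ * Sb * A).mulVec xb = (Aᵀ * Sbᵀ * Sb).mulVec b := by
    apply key _ _ _ hMbu
    rw [hxb]; simp only [Matrix.mul_assoc]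
  have eql : (Aᵀ * Slᵀ * Sl * A).mulVec xl = (Aᵀ * Slᵀ * Sl).mulVec b := by
    apply key _ _ _ hMlu
    rw [hxl]; simp only [Matrix.mul_assoc]
  -- the key vector identity
  have h1 : (Aᵀ * Saᵀ * Sa * A + Aᵀ * Sbᵀ * Sb * A).mulVec (xl - xa)
      = (Aᵀ * Sbᵀ * Sb * A).mulVec (xb - xa) := by
    have h2 : (Aᵀ * Saᵀ * Sa * A + Aᵀ * Sbᵀ * Sb * A).mulVec xl
        = (Aᵀ * Saᵀ * Sa).mulVec b + (Aᵀ * Sbᵀ * Sb).mulVec b := by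
      have : Aᵀ * Saᵀ * Sa * A + Aᵀ * Sbᵀ * Sb * A = (2 : ℝ) • (Aᵀ * Slᵀ * Sl * A) := by
        rw [hMlR, smul_smul]; norm_num
      rw [this, Matrix.smul_mulVec, eql, hNL, Matrix.smul_mulVec,
        smul_smul]
      norm_num
      rw [Matrix.add_mulVec]
    have h3 : (Aᵀ * Saᵀ * Sa * A + Aᵀ * Sbᵀ * Sb * A).mulVec xa
        = (Aᵀ * Saᵀ * Sa).mulVec b + (Aᵀ * Sbᵀ * Sb * A).mulVec xa := by
      rw [Matrix.add_mulVec, eqa]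
    rw [Matrix.mulVec_sub, Matrix.mulVec_sub, h2, h3, eqb]
    abel
  have h4 : xl - xa
      = ((Aᵀ * Saᵀ * Sa * A + Aᵀ * Sbᵀ * Sb * A)⁻¹
          * (Aᵀ * Sbᵀ * Sb * A)).mulVec (xb - xa) := by
    rw [← Matrix.mulVec_mulVec, ← h1, Matrix.mulVec_mulVec, Matrix.nonsing_inv_mul _ hMabu,
      Matrix.one_mulVec]
  -- matrix identity for the final answer
  have hVi : V⁻¹ = Vᵀ := Matrix.inv_eq_right_inv hV'
  have hVti : (Vᵀ)⁻¹ = V := Matrix.inv_eq_right_inv hV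
  have cV : ∀ (X : Matrix (Fin n) (Fin n) ℝ), Vᵀ * (V * X) = X := fun X => by
    rw [← Matrix.mul_assoc, hV, Matrix.one_mul]
  have cS : ∀ (X : Matrix (Fin n) (Fin n) ℝ), D * (D⁻¹ * X) = X := fun X => by
    rw [← Matrix.mul_assoc, Matrix.mul_nonsing_inv _ hDu, Matrix.one_mul]
  have cS' : ∀ (X : Matrix (Fin n) (Fin n) ℝ), D⁻¹ * (D * X) = X := fun X => by
    rw [← Matrix.mul_assoc, Matrix.nonsing_inv_mul _ hDu, Matrix.one_mul]
  have hfinal : A * (Aᵀ * Saᵀ * Sa * A + Aᵀ * Sbᵀ * Sb * A)⁻¹ * (Aᵀ * Sbᵀ * Sb * A)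
      = U * (Ha + Hb)⁻¹ * Hb * D * Vᵀ := by
    rw [hsum, hbR, hSVD, Matrix.mul_inv_rev, Matrix.mul_inv_rev, Matrix.mul_inv_rev,
      Matrix.mul_inv_rev, hVi, hVti]
    simp only [Matrix.mul_assoc, cV, cS, cS']
  calc A.mulVec (xl - xa)
      = (A * ((Aᵀ * Saᵀ * Sa * A + Aᵀ * Sbᵀ * Sb * A)⁻¹
          * (Aᵀ * Sbᵀ * Sb * A))).mulVec (xb - xa) := by
        rw [h4, Matrix.mulVec_mulVec]
    _ = (U * (Ha + Hb)⁻¹ * Hb * D * Vᵀ).mulVec (xb - xa) := by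
        rw [← Matrix.mul_assoc, hfinal]
end
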